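/- If the decision version of MAX-CRN-Output (given a CRN and a target value t, does a flow with output ≥ t exist?) were solvable in polynomial time, then 3-partition restricted to instances with Σ s_i polynomial in m would be solvable in polynomial time; formally, the reduction mapping a 3-partition instance to its lattice CRN is correct: the 3-partition instance is a yes-instance iff the CRN admits a flow with output exactly s = Σ s_i. -/

import Mathlib

/-- Correctness of the reduction from 3-partition to the
decision version of MAX-CRN-Output on the lattice CRN: the 3-partition
instance is a yes-instance (the indices `{1,…,3m}` partition into `m` triples
each summing to `s/m`, expressed by an assignment `c` of each index to its
column) iff the lattice CRN admits a valid flow with output exactly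
`s = Σ_i s_i`.

A flow of the lattice CRN is described by its on/off assignment `σ`; validity
means at most one on-switch per row (each on-switch consumes the full row
influx `s i`) and the vertical consumption of each column is at most the top
influx `s/m`; the output collected at `O` is `Σ_i Σ_j (if σ i j then s i else 0)`. -/
theorem lattice_reduction_correct
    (m : ℕ) (hm : 0 < m)
    (s : Fin (3 * m) → ℕ) (hpos : ∀ i, 0 < s i)
    (hdvd : m ∣ ∑ i, s i)
    (hbound : ∀ i, ((∑ k, s k : ℕ) : ℚ) / (4 * m) < (s i : ℚ)
      ∧ ((s i : ℕ) : ℚ) < ((∑ k, s k : ℕ) : ℚ) / (2 * m)) :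
    (∃ c : Fin (3 * m) → Fin m, ∀ j,
        (Finset.univ.filter (fun i => c i = j)).card = 3
        ∧ ∑ i ∈ Finset.univ.filter (fun i => c i = j), s i = (∑ i, s i) / m)
    ↔ (∃ σ : Fin (3 * m) → Fin m → Bool,
        (∀ i j k, σ i j = true → σ i k = true → j = k)
        ∧ (∀ j, ∑ i ∈ Finset.univ.filter (fun i => σ i j = true), s i
            ≤ (∑ i, s i) / m)
        ∧ (∑ i, ∑ j, (if σ i j then s i else 0)) = ∑ i, s i) := by
  have hm' : (0:ℚ) < (m:ℚ) := by exact_mod_cast hm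
  set S := ∑ i, s i with hSdef
  have hSpos : 0 < S := by
    have h3 : (0:ℕ) < 3*m := by omega
    exact Finset.sum_pos (fun i _ => hpos i) ⟨⟨0, h3⟩, Finset.mem_univ _⟩
  have hSq : (0:ℚ) < (S:ℚ) := by exact_mod_cast hSpos
  obtain ⟨q, hq⟩ := hdvd
  have hdiv : S / m = q := by rw [hq]; exact Nat.mul_div_cancel_left q hm
  have hqpos : 0 < q := by
    rcases Nat.eq_zero_or_pos q with h | h
    · rw [h, Nat.mul_zero] at hq; omega
    · exact h
  have hqQ : ((q:ℕ):ℚ) = (S:ℚ) / (m:ℚ) := by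
    rw [eq_div_iff (ne_of_gt hm')]
    have h := hq
    have h2 : ((S:ℕ):ℚ) = (m:ℚ) * (q:ℚ) := by exact_mod_cast h
    linarith
  constructor
  · rintro ⟨c, hc⟩
    refine ⟨fun i j => decide (c i = j), ?_, ?_, ?_⟩
    · intro i j k hj hk
      simp only [decide_eq_true_eq] at hj hk
      subst hj; exact hk
    · intro j
      have h1 := (hc j).2
      have hfeq : (Finset.univ.filter (fun i => decide (c i = j) = true))
          = Finset.univ.filter (fun i => c i = j) := by
        ext i; simp
      rw [hfeq, h1]
    · have hin : ∀ i, (∑ j, if decide (c i = j) = true then s i else 0) = s i := by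
        intro i
        simp [Finset.sum_ite_eq]
      calc (∑ i, ∑ j, if decide (c i = j) = true then s i else 0)
          = ∑ i, s i := Finset.sum_congr rfl (fun i _ => hin i)
        _ = S := rfl
  · rintro ⟨σ, huniq, hcol, htot⟩
    have hrow : ∀ i, (Finset.univ.filter (fun j => σ i j = true)).card ≤ 1 := by
      intro i
      refine Finset.card_le_one.mpr ?_
      intro a ha b hb
      simp only [Finset.mem_filter] at ha hb
      exact huniq i a b ha.2 hb.2
    have hrowsum : ∀ i, (∑ j, if σ i j then s i else 0)
        = (Finset.univ.filter (fun j => σ i j = true)).card * s i := by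
      intro i
      rw [← Finset.sum_filter]
      simp [Finset.sum_const, mul_comm]
    have hle : ∀ i ∈ (Finset.univ : Finset (Fin (3*m))),
        (∑ j, if σ i j then s i else 0) ≤ s i := by
      intro i _
      rw [hrowsum i]
      calc (Finset.univ.filter (fun j => σ i j = true)).card * s i
          ≤ 1 * s i := Nat.mul_le_mul_right _ (hrow i)
        _ = s i := one_mul _
    have heq : ∀ i ∈ (Finset.univ : Finset (Fin (3*m))),
        (∑ j, if σ i j then s i else 0) = s i :=
      (Finset.sum_eq_sum_iff_of_le hle).mp htot
    have hone : ∀ i, ∃ j, σ i j = true := by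
      intro i
      by_contra h
      push_neg at h
      have h2 := heq i (Finset.mem_univ i)
      rw [hrowsum i] at h2
      have h3 : (Finset.univ.filter (fun j => σ i j = true)) = ∅ := by
        ext j; simp [h j]
      rw [h3] at h2
      simp at h2
      exact (Nat.ne_of_gt (hpos i)) h2.symm
    choose c hc using hone
    have hcspec : ∀ i j, c i = j ↔ σ i j = true := by
      intro i j
      constructor
      · rintro rfl; exact hc i
      · intro h; exact huniq i (c i) j (hc i) h
    have hfilt : ∀ j, (Finset.univ.filter (fun i => c i = j))
        = Finset.univ.filter (fun i => σ i j = true) := by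
      intro j; ext i; simp [hcspec]
    set T := fun j => ∑ i ∈ Finset.univ.filter (fun i => σ i j = true), s i with hT
    have hsumT : ∑ j, T j = S := by
      calc ∑ j, T j = ∑ j, ∑ i, if σ i j then s i else 0 := by
            refine Finset.sum_congr rfl fun j _ => ?_
            simp only [hT]
            rw [Finset.sum_filter]
        _ = ∑ i, ∑ j, if σ i j then s i else 0 := Finset.sum_comm
        _ = S := htot
    have hTle : ∀ j ∈ (Finset.univ : Finset (Fin m)), T j ≤ q := fun j _ => hdiv ▸ hcol j
    have hTeq : ∀ j, T j = q := by
      have h2 : ∑ _j : Fin m, q = S := by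
        rw [Finset.sum_const, Finset.card_univ, Fintype.card_fin, smul_eq_mul, ← hq]
      have h3 := (Finset.sum_eq_sum_iff_of_le hTle).mp (hsumT.trans h2.symm)
      exact fun j => h3 j (Finset.mem_univ j)
    refine ⟨c, fun j => ?_⟩
    have hsum : ∑ i ∈ Finset.univ.filter (fun i => c i = j), s i = q := by
      rw [hfilt j]; exact hTeq j
    refine ⟨?_, by rw [hsum, hdiv]⟩
    set A := Finset.univ.filter (fun i => c i = j) with hA
    have hAsumQ : (∑ i ∈ A, ((s i : ℕ):ℚ)) = (q:ℚ) := by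
      rw [← Nat.cast_sum, hsum]
    have hAne : A.Nonempty := by
      rcases Finset.eq_empty_or_nonempty A with h | h
      · exfalso
        rw [h, Finset.sum_empty] at hAsumQ
        have : (0:ℚ) < (q:ℚ) := by exact_mod_cast hqpos
        linarith
      · exact h
    have hlow : (A.card : ℚ) * ((S:ℚ) / (4 * m)) < (q:ℚ) := by
      have := Finset.sum_lt_sum_of_nonempty hAne
        (f := fun _ => (S:ℚ) / (4 * m)) (g := fun i => ((s i : ℕ):ℚ))
        (fun i _ => (hbound i).1)
      rwa [Finset.sum_const, nsmul_eq_mul, hAsumQ] at this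
    have hhigh : (q:ℚ) < (A.card : ℚ) * ((S:ℚ) / (2 * m)) := by
      have := Finset.sum_lt_sum_of_nonempty hAne
        (f := fun i => ((s i : ℕ):ℚ)) (g := fun _ => (S:ℚ) / (2 * m))
        (fun i _ => (hbound i).2)
      rwa [Finset.sum_const, nsmul_eq_mul, hAsumQ] at this
    rw [hqQ] at hlow hhigh
    have hmn : (m:ℚ) ≠ 0 := ne_of_gt hm'
    have hkey : (0:ℚ) < (S:ℚ) / (4 * m) := by positivity
    have hkey2 : (0:ℚ) < (S:ℚ) / (2 * m) := by positivity
    have h4 : (A.card : ℚ) < 4 := by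
      by_contra h
      push_neg at h
      have hge : (S:ℚ) / m ≤ (A.card:ℚ) * ((S:ℚ) / (4 * m)) := by
        calc (S:ℚ) / m = 4 * ((S:ℚ) / (4 * m)) := by
              field_simp
            _ ≤ (A.card:ℚ) * ((S:ℚ) / (4 * m)) :=
              mul_le_mul_of_nonneg_right h (le_of_lt hkey)
      linarith
    have h2 : (2:ℚ) < (A.card : ℚ) := by
      by_contra h
      push_neg at h
      have hle2 : (A.card:ℚ) * ((S:ℚ) / (2 * m)) ≤ (S:ℚ) / m := by
        calc (A.card:ℚ) * ((S:ℚ) / (2 * m))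
              ≤ 2 * ((S:ℚ) / (2 * m)) := mul_le_mul_of_nonneg_right h (le_of_lt hkey2)
            _ = (S:ℚ) / m := by field_simp
      linarith
    have h4' : A.card < 4 := by exact_mod_cast h4
    have h2' : 2 < A.card := by exact_mod_cast h2
    omega
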